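/- Let G be a graph and let c, f be nonadjacent vertices of G lying in the same connected component. Then there exists exactly one minimal (c,f)-separator B of G such that every vertex of B is adjacent to c. -/

import Mathlib

/-- `B` is a `(c,f)`-separator of `G`: `c, f ∉ B` and `c` and `f` lie in different
connected components of the induced subgraph `G − B`. -/
def SimpleGraph.IsSeparator {V : Type*} (G : SimpleGraph V) (c f : V) (Bs : Set V) : Prop :=
  ∃ (hc : c ∈ Bsᶜ) (hf : f ∈ Bsᶜ), ¬ (G.induce Bsᶜ).Reachable ⟨c, hc⟩ ⟨f, hf⟩

/-- `B` is a minimal `(c,f)`-separator: no proper subset of `B` is a `(c,f)`-separator. -/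
def SimpleGraph.IsMinSeparator {V : Type*} (G : SimpleGraph V) (c f : V) (Bs : Set V) : Prop :=
  G.IsSeparator c f Bs ∧ ∀ Bs' ⊂ Bs, ¬ G.IsSeparator c f Bs'

/-- `u` and `g` lie in the same connected component of `G − B`. -/
def SimpleGraph.InSepComp {V : Type*} (G : SimpleGraph V) (Bs : Set V) (u g : V) : Prop :=
  ∃ (hu : u ∈ Bsᶜ) (hg : g ∈ Bsᶜ), (G.induce Bsᶜ).Reachable ⟨u, hu⟩ ⟨g, hg⟩

namespace KloksKratsch

open SimpleGraph

variable {V : Type*} {G : SimpleGraph V}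

/-- A walk in `G` whose support lies in `S` gives reachability in the induced subgraph. -/
lemma walk_to_induce {S : Set V} :
    ∀ {u v : V} (p : G.Walk u v) (hp : ∀ x ∈ p.support, x ∈ S),
      (G.induce S).Reachable ⟨u, hp u p.start_mem_support⟩ ⟨v, hp v p.end_mem_support⟩ := by
  intro u v p
  induction p with
  | nil => intro hp; rfl
  | @cons a b w h q ih =>
    intro hp
    have hq : ∀ x ∈ q.support, x ∈ S := fun x hx => hp x (by simp [hx])
    have hadj : (G.induce S).Adj ⟨a, hp a (SimpleGraph.Walk.start_mem_support _)⟩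
        ⟨b, hq b q.start_mem_support⟩ := by
      simpa using h
    exact hadj.reachable.trans (ih hq)

/-- Reachability in the induced subgraph gives a walk in `G` with support in `S`. -/
lemma induce_to_walk {S : Set V} {u v : V} (hu : u ∈ S) (hv : v ∈ S)
    (h : (G.induce S).Reachable ⟨u, hu⟩ ⟨v, hv⟩) :
    ∃ p : G.Walk u v, ∀ x ∈ p.support, x ∈ S := by
  obtain ⟨q⟩ := h
  refine ⟨(q.map (SimpleGraph.Embedding.induce S).toHom), ?_⟩
  intro x hx
  change x ∈ (q.map (SimpleGraph.Embedding.induce S).toHom).support at hx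
  rw [SimpleGraph.Walk.support_map, List.mem_map] at hx
  obtain ⟨⟨y, hy⟩, _, rfl⟩ := hx
  exact hy

/-- Last-neighbor extraction: if some vertex on a walk `p : x ⋯ f` is adjacent to `c`,
then there is a suffix walk `q : b ⋯ f` where `b` is adjacent to `c` and `b` is the
only vertex of `q` adjacent to `c`. -/
lemma last_neighbor {c f : V} :
    ∀ {x : V} (p : G.Walk x f), (∃ y ∈ p.support, G.Adj c y) →
      ∃ b, G.Adj c b ∧ ∃ q : G.Walk b f,
        (∀ z ∈ q.support, z ∈ p.support) ∧ (∀ z ∈ q.support, G.Adj c z → z = b) := by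
  intro x p
  induction p with
  | nil =>
    rintro ⟨y, hy, hadj⟩
    simp only [SimpleGraph.Walk.support_nil, List.mem_singleton] at hy
    subst hy
    exact ⟨y, hadj, SimpleGraph.Walk.nil, by simp, by simp⟩
  | @cons a b w h q ih =>
    rintro ⟨y, hy, hadj⟩
    by_cases hq : ∃ z ∈ q.support, G.Adj c z
    · obtain ⟨b', hb', r, hsub, hlast⟩ := ih hq
      exact ⟨b', hb', r, fun z hz => by simp [hsub z hz], hlast⟩
    · have hyx : y = a := by
        rcases (by simpa using hy : y = a ∨ y ∈ q.support) with h' | h'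
        · exact h'
        · exact absurd ⟨y, h', hadj⟩ hq
      subst hyx
      refine ⟨y, hadj, SimpleGraph.Walk.cons h q, fun z hz => hz, ?_⟩
      intro z hz hza
      rcases (by simpa using hz : z = y ∨ z ∈ q.support) with h' | h'
      · exact h'
      · exact absurd ⟨z, h', hza⟩ hq

end KloksKratsch

/-- **Kloks–Kratsch, Lemma 4.** If `c` and `f` are distinct nonadjacent vertices of a
finite graph `G` lying in the same connected component, then there exists exactly one
minimal `(c,f)`-separator `B` such that every vertex of `B` is adjacent to `c`. -/
theorem existsUnique_minSeparator_close {V : Type*} [Finite V] (G : SimpleGraph V)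
    (c f : V) (hne : c ≠ f) (hnadj : ¬ G.Adj c f) (hreach : G.Reachable c f) :
    ∃! Bs : Set V, G.IsMinSeparator c f Bs ∧ ∀ b ∈ Bs, G.Adj c b := by
  classical
  open KloksKratsch in
  -- the canonical separator
  set B : Set V := {b | G.Adj c b ∧ G.InSepComp (G.neighborSet c \ {b}) f b} with hBdef
  have hcB : c ∈ Bᶜ := fun h => G.irrefl h.1
  have hfB : f ∈ Bᶜ := fun h => hnadj h.1
  -- every member of `B` admits a walk to `f` avoiding all other neighbors of `c`
  have hwalk : ∀ b ∈ B, ∃ q : G.Walk b f, ∀ z ∈ q.support, ¬ (G.Adj c z ∧ z ≠ b) := by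
    rintro b ⟨hb, hu, hg, hr⟩
    obtain ⟨p, hp⟩ := KloksKratsch.induce_to_walk hu hg hr
    refine ⟨p.reverse, ?_⟩
    intro z hz
    have hz' : z ∈ p.support := by simpa using hz
    have := hp z hz'
    simp only [Set.mem_compl_iff, Set.mem_diff, Set.mem_singleton_iff,
      SimpleGraph.mem_neighborSet, not_and, not_not] at this
    rintro ⟨hza, hzb⟩
    exact hzb (this hza)
  -- any walk from `c` to `f` meets `B`
  have hmeet : ∀ p : G.Walk c f, ∃ x ∈ p.support, x ∈ B := by
    intro p
    cases p with
    | nil => exact absurd rfl hne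
    | @cons _ v _ h q =>
      obtain ⟨b, hb, r, hsub, hlast⟩ := KloksKratsch.last_neighbor
        (SimpleGraph.Walk.cons h q) ⟨v, by simp, h⟩
      refine ⟨b, hsub b r.start_mem_support, hb, ?_⟩
      have hb' : b ∈ (G.neighborSet c \ {b})ᶜ := by simp
      have hf' : f ∈ (G.neighborSet c \ {b})ᶜ := by
        simp only [Set.mem_compl_iff, Set.mem_diff, SimpleGraph.mem_neighborSet]
        tauto
      refine ⟨hf', hb', ?_⟩
      have hsup : ∀ z ∈ r.reverse.support, z ∈ (G.neighborSet c \ {b})ᶜ := by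
        intro z hz
        have hz' : z ∈ r.support := by simpa using hz
        simp only [Set.mem_compl_iff, Set.mem_diff, Set.mem_singleton_iff,
          SimpleGraph.mem_neighborSet, not_and, not_not]
        exact fun hza => hlast z hz' hza
      exact KloksKratsch.walk_to_induce r.reverse hsup
  -- if all of a walk's support avoids `Bs'` and `B ⊆ ...` helper: B is a separator
  have hBsep : G.IsSeparator c f B := by
    refine ⟨hcB, hfB, fun hr => ?_⟩
    obtain ⟨p, hp⟩ := KloksKratsch.induce_to_walk hcB hfB hr
    obtain ⟨x, hx, hxB⟩ := hmeet p
    exact hp x hx hxB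
  -- B is a minimal separator
  have hBmin : G.IsMinSeparator c f B := by
    refine ⟨hBsep, ?_⟩
    rintro Bs' hss ⟨hc', hf', hnr⟩
    obtain ⟨b, hbB, hbBs'⟩ := Set.exists_of_ssubset hss
    obtain ⟨q, hq⟩ := hwalk b hbB
    apply hnr
    have hsup : ∀ z ∈ (SimpleGraph.Walk.cons hbB.1 q).support, z ∈ Bs'ᶜ := by
      intro z hz
      rcases (by simpa using hz : z = c ∨ z ∈ q.support) with rfl | hz'
      · exact hc'
      · intro hzBs'
        have hzB : z ∈ B := hss.1 hzBs'
        by_cases hzb : z = b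
        · exact hbBs' (hzb ▸ hzBs')
        · exact hq z hz' ⟨hzB.1, hzb⟩
    exact KloksKratsch.walk_to_induce _ hsup
  refine ⟨B, ⟨hBmin, fun b hb => hb.1⟩, ?_⟩
  rintro B' ⟨⟨⟨hc', hf', hnr⟩, hmin'⟩, hclose⟩
  -- B ⊆ B'
  have hBB' : B ⊆ B' := by
    intro b hbB
    by_contra hbB'
    obtain ⟨q, hq⟩ := hwalk b hbB
    apply hnr
    have hsup : ∀ z ∈ (SimpleGraph.Walk.cons hbB.1 q).support, z ∈ B'ᶜ := by
      intro z hz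
      rcases (by simpa using hz : z = c ∨ z ∈ q.support) with rfl | hz'
      · exact hc'
      · intro hzB'
        by_cases hzb : z = b
        · exact hbB' (hzb ▸ hzB')
        · exact hq z hz' ⟨hclose z hzB', hzb⟩
    exact KloksKratsch.walk_to_induce _ hsup
  -- B' ⊆ B by minimality
  have hB'B : B' ⊆ B := by
    by_contra hnsub
    obtain ⟨b', hb'B', hb'B⟩ := Set.not_subset.mp hnsub
    have hss : B' \ {b'} ⊂ B' := by
      constructor
      · exact Set.diff_subset
      · intro hle
        exact (hle hb'B').2 rfl
    apply hmin' _ hss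
    have hcm : c ∈ (B' \ {b'})ᶜ := fun h => hc' h.1
    have hfm : f ∈ (B' \ {b'})ᶜ := fun h => hf' h.1
    refine ⟨hcm, hfm, fun hr => ?_⟩
    obtain ⟨p, hp⟩ := KloksKratsch.induce_to_walk hcm hfm hr
    obtain ⟨x, hx, hxB⟩ := hmeet p
    exact hp x hx ⟨hBB' hxB, fun hxb => hb'B (hxb ▸ hxB)⟩
  exact Set.Subset.antisymm hB'B hBB'
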